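/- arXiv:1807.06158 — 4 statements merged into one kernel-verified Lean document; each statement's English description precedes it below -/
import Mathlib

section
/- The function g: ℝ → ℝ∪{+∞} defined by g(x) = -x - log(1 - e^x) for x < 0 and g(x) = +∞ for x ≥ 0 is convex on ℝ. -/
/-- The extended-real-valued function g(x) = -x - log(1 - e^x) for x < 0 and +∞ otherwise. -/
noncomputable def gGA : ℝ → EReal := fun x =>
  if x < 0 then ((-x - Real.log (1 - Real.exp x) : ℝ) : EReal) else ⊤

noncomputable def fGA : ℝ → ℝ := fun x => -x - Real.log (1 - Real.exp x)

lemma fGA_hasDeriv {x : ℝ} (hx : x < 0) :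
    HasDerivAt fGA (-1 + Real.exp x / (1 - Real.exp x)) x := by
  have hlt : Real.exp x < 1 := Real.exp_lt_one_iff.2 hx
  have hne : 1 - Real.exp x ≠ 0 := by linarith
  have h1 : HasDerivAt (fun y : ℝ => 1 - Real.exp y) (-Real.exp x) x := by
    simpa using (Real.hasDerivAt_exp x).const_sub 1
  have h2 := (h1.log hne)
  have h3 : HasDerivAt (fun y : ℝ => -y) (-1 : ℝ) x := by
    exact (hasDerivAt_id x).neg
  have := h3.sub h2
  convert this using 1
  · rfl
  · rfl
  · rfl
  · field_simp
    ring

lemma fGA_deriv2 {x : ℝ} (hx : x < 0) :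
    HasDerivAt (fun y => -1 + Real.exp y / (1 - Real.exp y))
      (Real.exp x / (1 - Real.exp x) ^ 2) x := by
  have hlt : Real.exp x < 1 := Real.exp_lt_one_iff.2 hx
  have hne : 1 - Real.exp x ≠ 0 := by linarith
  have h1 : HasDerivAt (fun y : ℝ => 1 - Real.exp y) (-Real.exp x) x := by
    simpa using (Real.hasDerivAt_exp x).const_sub 1
  have h2 := ((Real.hasDerivAt_exp x).div h1 hne).const_add (-1 : ℝ)
  convert h2 using 1
  · rfl
  · rfl
  · rfl
  · field_simp
    ring

lemma fGA_convexOn : ConvexOn ℝ (Set.Iio (0:ℝ)) fGA := by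
  have hio : interior (Set.Iio (0:ℝ)) = Set.Iio 0 := interior_Iio
  refine convexOn_of_hasDerivWithinAt2_nonneg (convex_Iio 0)
    (f' := fun y => -1 + Real.exp y / (1 - Real.exp y))
    (f'' := fun y => Real.exp y / (1 - Real.exp y) ^ 2) ?_ ?_ ?_ ?_
  · intro x hx
    exact (fGA_hasDeriv hx).continuousAt.continuousWithinAt
  · intro x hx
    rw [hio] at hx ⊢
    exact (fGA_hasDeriv hx).hasDerivWithinAt
  · intro x hx
    rw [hio] at hx ⊢
    exact (fGA_deriv2 hx).hasDerivWithinAt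
  · intro x hx
    rw [hio] at hx
    positivity

theorem gGA_convex :
    ∀ x y t : ℝ, 0 ≤ t → t ≤ 1 →
      gGA (t * x + (1 - t) * y) ≤ (t : EReal) * gGA x + ((1 - t : ℝ) : EReal) * gGA y := by
  intro x y t ht0 ht1
  rcases eq_or_lt_of_le ht0 with rfl | ht0'
  · simp
  rcases eq_or_lt_of_le ht1 with rfl | ht1'
  · simp
  -- 0 < t < 1
  by_cases hx : x < 0
  · by_cases hy : y < 0
    · have hxy : t * x + (1 - t) * y < 0 := by nlinarith
      have key := fGA_convexOn.2 hx hy ht0'.le (by linarith : (0:ℝ) ≤ 1 - t) (by ring)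
      simp only [smul_eq_mul] at key
      simp only [gGA, if_pos hx, if_pos hy, if_pos hxy]
      rw [← EReal.coe_mul, ← EReal.coe_mul, ← EReal.coe_add]
      exact_mod_cast key
    · have : ((1 - t : ℝ) : EReal) * gGA y = ⊤ := by
        simp only [gGA, if_neg hy]
        exact EReal.coe_mul_top_of_pos (by linarith)
      rw [this]
      have hne : (t : EReal) * gGA x ≠ ⊥ := by
        simp only [gGA, if_pos hx]
        rw [← EReal.coe_mul]; exact EReal.coe_ne_bot _
      rw [EReal.add_top_of_ne_bot hne]
      exact le_top
  · have : (t : EReal) * gGA x = ⊤ := by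
      simp only [gGA, if_neg hx]
      exact EReal.coe_mul_top_of_pos ht0'
    rw [this]
    have hne : ((1 - t : ℝ) : EReal) * gGA y ≠ ⊥ := by
      simp only [gGA]
      split
      · rw [← EReal.coe_mul]; exact EReal.coe_ne_bot _
      · rw [EReal.coe_mul_top_of_pos (by linarith)]; simp
    rw [EReal.top_add_of_ne_bot hne]
    exact le_top
end

section
/- Let X be a finite type, and let ρ, ρ_E : X → ℝ be nonnegative functions. Define ψ*(ρ - ρ_E) = sup over functions D: X → (0,1) of Σ_{x∈X} [ρ(x)·log(D(x)) + ρ_E(x)·log(1 - D(x))]. Then this supremum equals Σ_{x ∈ X, ρ(x)+ρ_E(x) > 0} [ρ(x)·log(ρ(x)/(ρ(x)+ρ_E(x))) + ρ_E(x)·log(ρ_E(x)/(ρ(x)+ρ_E(x)))], with the convention 0·log 0 = 0 and 0·log(0/t) = 0. -/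
open Finset Filter Topology

private lemma key_ineq (a s d : ℝ) (ha : 0 ≤ a) (hs : 0 < s) (hd : 0 < d) :
    a * Real.log d ≤ a * Real.log (a / s) + (d * s - a) := by
  rcases eq_or_lt_of_le ha with h | h
  · have : a = 0 := h.symm
    simp [this]
    positivity
  · have hpos : 0 < d * s / a := by positivity
    have h1 : Real.log (d * s / a) ≤ d * s / a - 1 := Real.log_le_sub_one_of_pos hpos
    have h2 : Real.log (d * s / a) = Real.log d - Real.log (a / s) := by
      rw [Real.log_div (by positivity) h.ne', Real.log_mul hd.ne' hs.ne',
        Real.log_div h.ne' hs.ne']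
      ring
    have h3 : a * Real.log (d * s / a) ≤ a * (d * s / a - 1) :=
      mul_le_mul_of_nonneg_left h1 h.le
    rw [h2, mul_sub] at h3
    have h5 : a * (d * s / a - 1) = d * s - a := by
      field_simp
    linarith [h3, h5.le, h5.ge]

private lemma point_le (a b d : ℝ) (ha : 0 ≤ a) (hb : 0 ≤ b) (hd0 : 0 < d) (hd1 : d < 1)
    (hab : 0 < a + b) :
    a * Real.log d + b * Real.log (1 - d) ≤
      a * Real.log (a / (a + b)) + b * Real.log (b / (a + b)) := by
  have h1 := key_ineq a (a + b) d ha hab hd0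
  have h2 := key_ineq b (a + b) (1 - d) hb hab (by linarith)
  have h3 : d * (a + b) + (1 - d) * (a + b) = a + b := by ring
  linarith

private lemma tendsto_aux (a s : ℝ) (ha : 0 ≤ a) (hs : 0 < s) :
    Tendsto (fun t : ℝ => a * Real.log ((a + t) / (s + 2 * t))) (nhdsWithin 0 (Set.Ioi 0))
      (nhds (a * Real.log (a / s))) := by
  rcases eq_or_lt_of_le ha with h | h
  · simp only [← h, zero_mul]
    exact tendsto_const_nhds
  · apply Tendsto.mono_left _ nhdsWithin_le_nhds
    have hc : ContinuousAt (fun t : ℝ => a * Real.log ((a + t) / (s + 2 * t))) 0 := by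
      apply continuousAt_const.mul
      have hf : ContinuousAt (fun t : ℝ => (a + t) / (s + 2 * t)) 0 := by
        apply ContinuousAt.div (by fun_prop) (by fun_prop)
        simpa using hs.ne'
      apply hf.log
      simp only [add_zero, mul_zero]
      exact (div_pos h hs).ne'
    have := hc.tendsto
    simpa using this

private lemma tendsto_aux2 (a b : ℝ) (hb : 0 ≤ b) (hs : 0 < a + b) :
    Tendsto (fun t : ℝ => b * Real.log (1 - (a + t) / (a + b + 2 * t)))
      (nhdsWithin 0 (Set.Ioi 0)) (nhds (b * Real.log (b / (a + b)))) := by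
  have h := tendsto_aux b (a + b) hb hs
  apply h.congr'
  filter_upwards [self_mem_nhdsWithin] with t ht
  have hden : (0 : ℝ) < a + b + 2 * t := by
    have : (0:ℝ) < t := ht
    linarith
  have heq : 1 - (a + t) / (a + b + 2 * t) = (b + t) / (a + b + 2 * t) := by
    rw [eq_div_iff hden.ne', sub_mul, div_mul_cancel₀ _ hden.ne']
    ring
  rw [heq]

open Finset in
theorem psiStar_eq_sum (X : Type*) [Fintype X] (ρ ρE : X → ℝ)
    (hρ : ∀ x, 0 ≤ ρ x) (hρE : ∀ x, 0 ≤ ρE x) :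
    sSup {v : ℝ | ∃ D : X → ℝ, (∀ x, D x ∈ Set.Ioo (0 : ℝ) 1) ∧
        v = ∑ x, (ρ x * Real.log (D x) + ρE x * Real.log (1 - D x))} =
      ∑ x, (if 0 < ρ x + ρE x then
          ρ x * Real.log (ρ x / (ρ x + ρE x)) +
          ρE x * Real.log (ρE x / (ρ x + ρE x))
        else 0) := by
  set S := {v : ℝ | ∃ D : X → ℝ, (∀ x, D x ∈ Set.Ioo (0 : ℝ) 1) ∧
      v = ∑ x, (ρ x * Real.log (D x) + ρE x * Real.log (1 - D x))} with hS
  set T := ∑ x, (if 0 < ρ x + ρE x then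
      ρ x * Real.log (ρ x / (ρ x + ρE x)) +
      ρE x * Real.log (ρE x / (ρ x + ρE x))
    else 0) with hT
  have hub : ∀ v ∈ S, v ≤ T := by
    rintro v ⟨D, hD, rfl⟩
    apply Finset.sum_le_sum
    intro x _
    by_cases h : 0 < ρ x + ρE x
    · rw [if_pos h]
      exact point_le _ _ _ (hρ x) (hρE x) (hD x).1 (hD x).2 h
    · rw [if_neg h]
      have ha : ρ x = 0 := le_antisymm (by nlinarith [hρE x, hρ x]) (hρ x)
      have hb : ρE x = 0 := le_antisymm (by nlinarith [hρE x, hρ x]) (hρE x)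
      simp [ha, hb]
  have hne : S.Nonempty := by
    refine ⟨∑ x, (ρ x * Real.log ((1:ℝ)/2) + ρE x * Real.log (1 - (1:ℝ)/2)),
      fun _ => (1:ℝ)/2, fun x => ⟨by norm_num, by norm_num⟩, rfl⟩
  have hbdd : BddAbove S := ⟨T, hub⟩
  refine le_antisymm (csSup_le hne hub) ?_
  have hF : Tendsto (fun t : ℝ => ∑ x, (ρ x * Real.log ((ρ x + t) / (ρ x + ρE x + 2 * t))
      + ρE x * Real.log (1 - (ρ x + t) / (ρ x + ρE x + 2 * t))))
      (nhdsWithin 0 (Set.Ioi 0)) (nhds T) := by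
    rw [hT]
    apply tendsto_finset_sum
    intro x _
    by_cases h : 0 < ρ x + ρE x
    · rw [if_pos h]
      exact (tendsto_aux (ρ x) (ρ x + ρE x) (hρ x) h).add
        (tendsto_aux2 (ρ x) (ρE x) (hρE x) h)
    · rw [if_neg h]
      have ha : ρ x = 0 := le_antisymm (by nlinarith [hρE x, hρ x]) (hρ x)
      have hb : ρE x = 0 := le_antisymm (by nlinarith [hρE x, hρ x]) (hρE x)
      simp only [ha, hb, zero_mul, add_zero, zero_add]
      exact tendsto_const_nhds
  refine le_of_tendsto hF ?_
  filter_upwards [self_mem_nhdsWithin] with t ht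
  apply le_csSup hbdd
  refine ⟨fun x => (ρ x + t) / (ρ x + ρE x + 2 * t), fun x => ?_, rfl⟩
  have ht' : (0:ℝ) < t := ht
  have hden : (0:ℝ) < ρ x + ρE x + 2 * t := by linarith [hρ x, hρE x]
  constructor
  · exact div_pos (by linarith [hρ x]) hden
  · rw [div_lt_one hden]
    linarith [hρE x]
end

section
/- With the setup of the previous statement, the supremum ψ*(ρ - ρ_E) is always ≤ 0 when ρ and ρ_E are probability mass functions on X, it is ≥ -2·log 2, and it equals -2·log 2 if and only if ρ = ρ_E. -/
lemma log_half : Real.log (1/2 : ℝ) = -Real.log 2 := by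
  rw [one_div, Real.log_inv]

lemma pointwise_half (d : ℝ) (hd : d ∈ Set.Ioo (0:ℝ) 1) :
    Real.log d + Real.log (1 - d) ≤ -2 * Real.log 2 := by
  obtain ⟨h0, h1⟩ := hd
  have h1' : 0 < 1 - d := by linarith
  have hprod : d * (1 - d) ≤ 1/4 := by nlinarith [sq_nonneg (d - 1/2)]
  have hlog := Real.log_le_log (by positivity) hprod
  rw [Real.log_mul (ne_of_gt h0) (ne_of_gt h1')] at hlog
  have h4 : Real.log (1/4 : ℝ) = -2 * Real.log 2 := by
    rw [show (1/4 : ℝ) = 2 ^ (-2 : ℤ) by norm_num, Real.log_zpow]; push_cast; ring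
  linarith [hlog, h4.le]

lemma exists_better (a b : ℝ) (ha : 0 ≤ a) (hb : 0 ≤ b) (hab : a ≠ b) :
    ∃ d ∈ Set.Ioo (0:ℝ) 1,
      -(a+b) * Real.log 2 < a * Real.log d + b * Real.log (1 - d) := by
  rcases eq_or_lt_of_le ha with ha0 | ha0
  · have hb0 : 0 < b := lt_of_le_of_ne hb (by simpa [← ha0] using hab)
    refine ⟨1/4, by norm_num, ?_⟩
    have : Real.log (1/2 : ℝ) < Real.log (1 - 1/4 : ℝ) := by
      apply Real.log_lt_log <;> norm_num
    rw [log_half] at this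
    have := mul_lt_mul_of_pos_left this hb0
    simp only [← ha0]
    nlinarith
  rcases eq_or_lt_of_le hb with hb0 | hb0
  · refine ⟨3/4, by norm_num, ?_⟩
    have : Real.log (1/2 : ℝ) < Real.log (3/4 : ℝ) := by
      apply Real.log_lt_log <;> norm_num
    rw [log_half] at this
    have := mul_lt_mul_of_pos_left this ha0
    simp only [← hb0]
    nlinarith
  · have hs : 0 < a + b := by linarith
    refine ⟨a / (a+b), ⟨by positivity, by rw [div_lt_one hs]; linarith⟩, ?_⟩
    have h1d : 1 - a/(a+b) = b/(a+b) := by field_simp; ring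
    have hconv := Real.strictConvexOn_mul_log.2 (Set.mem_Ici.2 ha) (Set.mem_Ici.2 hb)
      hab (by norm_num : (0:ℝ) < 1/2) (by norm_num : (0:ℝ) < 1/2) (by norm_num)
    simp only [smul_eq_mul] at hconv
    have hmid : (1/2:ℝ) * a + 1/2 * b = (a+b)/2 := by ring
    rw [hmid, Real.log_div (ne_of_gt hs) two_ne_zero] at hconv
    rw [h1d, Real.log_div (ne_of_gt ha0) (ne_of_gt hs),
      Real.log_div (ne_of_gt hb0) (ne_of_gt hs)]
    nlinarith [hconv]

open Finset in
theorem psiStar_bounds (X : Type*) [Fintype X] (ρ ρE : X → ℝ)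
    (hρ : ∀ x, 0 ≤ ρ x) (hρE : ∀ x, 0 ≤ ρE x)
    (hρ1 : ∑ x, ρ x = 1) (hρE1 : ∑ x, ρE x = 1) :
    sSup {v : ℝ | ∃ D : X → ℝ, (∀ x, D x ∈ Set.Ioo (0 : ℝ) 1) ∧
        v = ∑ x, (ρ x * Real.log (D x) + ρE x * Real.log (1 - D x))} ≤ 0 ∧
    -2 * Real.log 2 ≤
      sSup {v : ℝ | ∃ D : X → ℝ, (∀ x, D x ∈ Set.Ioo (0 : ℝ) 1) ∧
        v = ∑ x, (ρ x * Real.log (D x) + ρE x * Real.log (1 - D x))} ∧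
    (sSup {v : ℝ | ∃ D : X → ℝ, (∀ x, D x ∈ Set.Ioo (0 : ℝ) 1) ∧
        v = ∑ x, (ρ x * Real.log (D x) + ρE x * Real.log (1 - D x))} =
      -2 * Real.log 2 ↔ ρ = ρE) := by
  set S := {v : ℝ | ∃ D : X → ℝ, (∀ x, D x ∈ Set.Ioo (0 : ℝ) 1) ∧
      v = ∑ x, (ρ x * Real.log (D x) + ρE x * Real.log (1 - D x))} with hS
  classical
  -- membership of -2 log 2
  have hmem : (-2 * Real.log 2) ∈ S := by
    refine ⟨fun _ => 1/2, fun x => by norm_num, ?_⟩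
    simp only [log_half]
    rw [show (1 - 1/2 : ℝ) = 1/2 by norm_num]
    simp only [log_half]
    rw [Finset.sum_add_distrib, ← Finset.sum_mul, ← Finset.sum_mul, hρ1, hρE1]
    ring
  -- upper bound by 0 for all members
  have hub : ∀ v ∈ S, v ≤ 0 := by
    rintro v ⟨D, hD, rfl⟩
    apply Finset.sum_nonpos
    intro x _
    have h1 := (hD x).1
    have h2 := (hD x).2
    have hl1 : Real.log (D x) ≤ 0 := Real.log_nonpos h1.le h2.le
    have hl2 : Real.log (1 - D x) ≤ 0 := Real.log_nonpos (by linarith) (by linarith)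
    have := mul_nonpos_of_nonneg_of_nonpos (hρ x) hl1
    have := mul_nonpos_of_nonneg_of_nonpos (hρE x) hl2
    linarith
  have hbdd : BddAbove S := ⟨0, fun v hv => hub v hv⟩
  have hne : S.Nonempty := ⟨_, hmem⟩
  have h1 : sSup S ≤ 0 := csSup_le hne hub
  have h2 : -2 * Real.log 2 ≤ sSup S := le_csSup hbdd hmem
  refine ⟨h1, h2, ?_, ?_⟩
  · -- sSup = -2 log 2 → ρ = ρE
    intro heq
    by_contra hneq
    obtain ⟨x0, hx0⟩ : ∃ x0, ρ x0 ≠ ρE x0 := by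
      by_contra h
      push_neg at h
      exact hneq (funext h)
    obtain ⟨d, hd, hdlt⟩ := exists_better (ρ x0) (ρE x0) (hρ x0) (hρE x0) hx0
    set D : X → ℝ := fun x => if x = x0 then d else 1/2 with hDdef
    have hDmem : ∀ x, D x ∈ Set.Ioo (0:ℝ) 1 := by
      intro x
      by_cases hx : x = x0 <;> simp [hDdef, hx, hd]
      norm_num
    have hvS : (∑ x, (ρ x * Real.log (D x) + ρE x * Real.log (1 - D x))) ∈ S :=
      ⟨D, hDmem, rfl⟩
    have hsum : ∑ x : X, (-(ρ x + ρE x) * Real.log 2)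
        < ∑ x, (ρ x * Real.log (D x) + ρE x * Real.log (1 - D x)) := by
      apply Finset.sum_lt_sum
      · intro x _
        by_cases hx : x = x0
        · subst hx
          simp only [hDdef, if_pos rfl]
          exact hdlt.le
        · simp only [hDdef, if_neg hx]
          rw [show (1 - 1/2 : ℝ) = 1/2 by norm_num, log_half]
          apply le_of_eq; ring
      · refine ⟨x0, Finset.mem_univ _, ?_⟩
        simpa only [hDdef, if_pos rfl] using hdlt
    have hlhs : ∑ x : X, (-(ρ x + ρE x) * Real.log 2) = -2 * Real.log 2 := by
      rw [← Finset.sum_mul]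
      have : ∑ x : X, -(ρ x + ρE x) = -2 := by
        simp [Finset.sum_add_distrib, hρ1, hρE1]
        linarith [Finset.sum_add_distrib (s := (Finset.univ : Finset X)) (f := ρ) (g := ρE), hρ1, hρE1]
      rw [this]
    rw [hlhs] at hsum
    have := lt_of_lt_of_le hsum (le_csSup hbdd hvS)
    rw [heq] at this
    exact lt_irrefl _ this
  · -- ρ = ρE → sSup = -2 log 2
    intro heq
    subst heq
    refine le_antisymm (csSup_le hne ?_) h2
    rintro v ⟨D, hD, rfl⟩
    calc ∑ x, (ρ x * Real.log (D x) + ρ x * Real.log (1 - D x))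
        ≤ ∑ x : X, ρ x * (-2 * Real.log 2) := by
          apply Finset.sum_le_sum
          intro x _
          have := pointwise_half (D x) (hD x)
          have h := mul_le_mul_of_nonneg_left this (hρ x)
          linarith [h]
      _ = -2 * Real.log 2 := by rw [← Finset.sum_mul, hρ1, one_mul]
end

section
/- For probability mass functions ρ, ρ_E on a finite type X, the quantity sup_{D: X → (0,1)} Σ_x [ρ(x)·log D(x) + ρ_E(x)·log(1 - D(x))] equals 2·JSD(ρ, ρ_E) - 2·log 2, where JSD(ρ, ρ_E) = (1/2)·KL(ρ ‖ m) + (1/2)·KL(ρ_E ‖ m) with m = (ρ + ρ_E)/2 is the Jensen–Shannon divergence and KL(p ‖ q) = Σ_x p(x)·log(p(x)/q(x)). -/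
open Finset Filter Topology

/-- Kullback–Leibler divergence between finitely supported mass functions. -/
noncomputable def klDiv' {X : Type*} [Fintype X] (p q : X → ℝ) : ℝ :=
  ∑ x, p x * Real.log (p x / q x)

/-- Jensen–Shannon divergence. -/
noncomputable def jsDiv {X : Type*} [Fintype X] (p q : X → ℝ) : ℝ :=
  (1 / 2) * klDiv' p (fun x => (p x + q x) / 2) +
  (1 / 2) * klDiv' q (fun x => (p x + q x) / 2)

lemma pointwise_le {a b t : ℝ} (ha : 0 ≤ a) (hb : 0 ≤ b) (ht0 : 0 < t) (ht1 : t < 1) :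
    a * Real.log t + b * Real.log (1 - t) ≤
      a * Real.log (a / (a + b)) + b * Real.log (b / (a + b)) := by
  rcases eq_or_lt_of_le ha with ha0 | ha
  · rcases eq_or_lt_of_le hb with hb0 | hb
    · simp [← ha0, ← hb0]
    · have : b * Real.log (1 - t) ≤ 0 :=
        mul_nonpos_of_nonneg_of_nonpos hb.le (Real.log_nonpos (by linarith) (by linarith))
      rw [← ha0]
      simp only [zero_mul, zero_add, zero_add, div_self hb.ne', Real.log_one, mul_zero]
      linarith
  · rcases eq_or_lt_of_le hb with hb0 | hb
    · have : a * Real.log t ≤ 0 :=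
        mul_nonpos_of_nonneg_of_nonpos ha.le (Real.log_nonpos ht0.le ht1.le)
      rw [← hb0]
      simp only [zero_mul, add_zero, div_self ha.ne', Real.log_one, mul_zero]
      linarith
    · have hab : 0 < a + b := by linarith
      have h1 : Real.log (t * (a + b) / a) ≤ t * (a + b) / a - 1 :=
        Real.log_le_sub_one_of_pos (by positivity)
      have h2 : Real.log ((1 - t) * (a + b) / b) ≤ (1 - t) * (a + b) / b - 1 :=
        Real.log_le_sub_one_of_pos (by
          have h1t : 0 < 1 - t := by linarith
          positivity)
      have H1 : a * Real.log (t * (a + b) / a) ≤ t * (a + b) - a := by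
        calc a * Real.log (t * (a + b) / a) ≤ a * (t * (a + b) / a - 1) :=
              mul_le_mul_of_nonneg_left h1 ha.le
          _ = t * (a + b) - a := by field_simp
      have H2 : b * Real.log ((1 - t) * (a + b) / b) ≤ (1 - t) * (a + b) - b := by
        calc b * Real.log ((1 - t) * (a + b) / b) ≤ b * ((1 - t) * (a + b) / b - 1) :=
              mul_le_mul_of_nonneg_left h2 hb.le
          _ = (1 - t) * (a + b) - b := by field_simp
      have e1 : Real.log (t * (a + b) / a) = Real.log t + Real.log (a + b) - Real.log a := by
        rw [Real.log_div (by positivity) ha.ne', Real.log_mul ht0.ne' hab.ne']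
      have e2 : Real.log ((1 - t) * (a + b) / b)
          = Real.log (1 - t) + Real.log (a + b) - Real.log b := by
        rw [Real.log_div (mul_pos (sub_pos.mpr ht1) hab).ne' hb.ne', Real.log_mul (sub_pos.mpr ht1).ne' hab.ne']
      have e3 : Real.log (a / (a + b)) = Real.log a - Real.log (a + b) :=
        Real.log_div ha.ne' hab.ne'
      have e4 : Real.log (b / (a + b)) = Real.log b - Real.log (a + b) :=
        Real.log_div hb.ne' hab.ne'
      rw [e1] at H1
      rw [e2] at H2
      rw [e3, e4]
      have hsum : t * (a + b) + (1 - t) * (a + b) = a + b := by ring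
      nlinarith [H1, H2]

theorem psiStar_eq_jsd (X : Type*) [Fintype X] (ρ ρE : X → ℝ)
    (hρ : ∀ x, 0 ≤ ρ x) (hρE : ∀ x, 0 ≤ ρE x)
    (hρ1 : ∑ x, ρ x = 1) (hρE1 : ∑ x, ρE x = 1) :
    sSup {v : ℝ | ∃ D : X → ℝ, (∀ x, D x ∈ Set.Ioo (0 : ℝ) 1) ∧
        v = ∑ x, (ρ x * Real.log (D x) + ρE x * Real.log (1 - D x))} =
      2 * jsDiv ρ ρE - 2 * Real.log 2 := by
  set S := {v : ℝ | ∃ D : X → ℝ, (∀ x, D x ∈ Set.Ioo (0 : ℝ) 1) ∧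
        v = ∑ x, (ρ x * Real.log (D x) + ρE x * Real.log (1 - D x))} with hS
  set g : X → ℝ := fun x =>
    ρ x * Real.log (ρ x / (ρ x + ρE x)) + ρE x * Real.log (ρE x / (ρ x + ρE x)) with hg
  set M : ℝ := ∑ x, g x with hM
  -- upper bound
  have hub : ∀ v ∈ S, v ≤ M := by
    rintro v ⟨D, hD, rfl⟩
    apply Finset.sum_le_sum
    intro x _
    exact pointwise_le (hρ x) (hρE x) (hD x).1 (hD x).2
  -- the approximating family
  set v : ℝ → ℝ := fun t => ∑ x,
    (ρ x * Real.log ((ρ x + t) / (ρ x + ρE x + 2 * t)) +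
     ρE x * Real.log ((ρE x + t) / (ρ x + ρE x + 2 * t))) with hv
  have hmem : ∀ t : ℝ, 0 < t → v t ∈ S := by
    intro t ht
    refine ⟨fun x => (ρ x + t) / (ρ x + ρE x + 2 * t), ?_, ?_⟩
    · intro x
      have h1 : 0 < ρ x + t := by have := hρ x; linarith
      have h2 : 0 < ρ x + ρE x + 2 * t := by have := hρ x; have := hρE x; linarith
      constructor
      · positivity
      · rw [div_lt_one h2]
        have := hρE x
        linarith
    · apply Finset.sum_congr rfl
      intro x _
      have h2 : 0 < ρ x + ρE x + 2 * t := by have := hρ x; have := hρE x; linarith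
      congr 3
      rw [eq_sub_iff_add_eq, ← add_div, div_eq_one_iff_eq h2.ne']
      ring
  -- tendsto
  have htend : Tendsto v (𝓝[>] (0 : ℝ)) (𝓝 M) := by
    rw [hM]
    apply tendsto_finset_sum
    intro x _
    have key : ∀ a b : ℝ, 0 ≤ a → 0 ≤ b →
        Tendsto (fun t : ℝ => a * Real.log ((a + t) / (a + b + 2 * t))) (𝓝[>] (0 : ℝ))
          (𝓝 (a * Real.log (a / (a + b)))) := by
      intro a b ha hb
      rcases eq_or_lt_of_le ha with ha0 | ha
      · simpa [← ha0] using tendsto_const_nhds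
      · have hs : 0 < a + b := by linarith
        have hc : ContinuousAt (fun t : ℝ => a * Real.log ((a + t) / (a + b + 2 * t))) 0 := by
          apply ContinuousAt.mul continuousAt_const
          have hc0 : ContinuousAt (fun t : ℝ => (a + t) / (a + b + 2 * t)) 0 :=
            ContinuousAt.div (by fun_prop) (by fun_prop) (by simp [hs.ne'])
          have hne0 : (a + (0:ℝ)) / (a + b + 2 * 0) ≠ 0 := by
            simp only [add_zero, mul_zero]
            positivity
          exact hc0.log hne0
        have h := hc.tendsto.mono_left (nhdsWithin_le_nhds (s := Set.Ioi (0:ℝ)))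
        simpa using h
    have h1 := key (ρ x) (ρE x) (hρ x) (hρE x)
    have h2 := key (ρE x) (ρ x) (hρE x) (hρ x)
    have h2' : Tendsto (fun t : ℝ => ρE x * Real.log ((ρE x + t) / (ρ x + ρE x + 2 * t)))
        (𝓝[>] (0 : ℝ)) (𝓝 (ρE x * Real.log (ρE x / (ρ x + ρE x)))) := by
      have e : (fun t : ℝ => ρE x * Real.log ((ρE x + t) / (ρ x + ρE x + 2 * t)))
          = fun t : ℝ => ρE x * Real.log ((ρE x + t) / (ρE x + ρ x + 2 * t)) := by
        funext t; rw [add_comm (ρ x) (ρE x)]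
      rw [e, add_comm (ρ x) (ρE x)]
      exact h2
    exact h1.add h2'
  -- sSup S = M
  have hsup : sSup S = M := by
    have hne : S.Nonempty := ⟨v 1, hmem 1 one_pos⟩
    apply csSup_eq_of_forall_le_of_forall_lt_exists_gt hne hub
    intro w hw
    have hev : ∀ᶠ t in 𝓝[>] (0 : ℝ), w < v t := htend.eventually (lt_mem_nhds hw)
    obtain ⟨t, hwvt, ht⟩ := (hev.and self_mem_nhdsWithin).exists
    exact ⟨v t, hmem t ht, hwvt⟩
  rw [hsup]
  -- M = 2 jsDiv − 2 log 2
  have hjs : 2 * jsDiv ρ ρE = M + 2 * Real.log 2 := by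
    have split : ∀ a b : ℝ, 0 ≤ a → 0 ≤ b →
        a * Real.log (a / ((a + b) / 2)) = a * Real.log (a / (a + b)) + a * Real.log 2 := by
      intro a b ha hb
      rcases eq_or_lt_of_le ha with ha0 | ha
      · simp [← ha0]
      · have hs : 0 < a + b := by linarith
        have : a / ((a + b) / 2) = a / (a + b) * 2 := by field_simp
        rw [this, Real.log_mul (by positivity) two_ne_zero]
        ring
    have K1 : klDiv' ρ (fun x => (ρ x + ρE x) / 2)
        = (∑ x, ρ x * Real.log (ρ x / (ρ x + ρE x))) + Real.log 2 := by
      unfold klDiv'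
      rw [show (∑ x, ρ x * Real.log (ρ x / ((ρ x + ρE x) / 2)))
          = ∑ x, (ρ x * Real.log (ρ x / (ρ x + ρE x)) + ρ x * Real.log 2) from
        Finset.sum_congr rfl fun x _ => split (ρ x) (ρE x) (hρ x) (hρE x)]
      rw [Finset.sum_add_distrib, ← Finset.sum_mul, hρ1, one_mul]
    have K2 : klDiv' ρE (fun x => (ρ x + ρE x) / 2)
        = (∑ x, ρE x * Real.log (ρE x / (ρ x + ρE x))) + Real.log 2 := by
      unfold klDiv'
      rw [show (∑ x, ρE x * Real.log (ρE x / ((ρ x + ρE x) / 2)))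
          = ∑ x, (ρE x * Real.log (ρE x / (ρ x + ρE x)) + ρE x * Real.log 2) from
        Finset.sum_congr rfl fun x _ => by
          have h := split (ρE x) (ρ x) (hρE x) (hρ x)
          rw [add_comm (ρE x) (ρ x)] at h
          exact h]
      rw [Finset.sum_add_distrib, ← Finset.sum_mul, hρE1, one_mul]
    unfold jsDiv
    rw [K1, K2, hM, hg, Finset.sum_add_distrib]
    ring
  linarith
end
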